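/- Let p be a prime. The number of points of the Fermat hypersurface x_0^{p+1} + x_1^{p+1} + x_2^{p+1} + x_3^{p+1} = 0 in the projective space P^3 over the field F_{p^2} equals (p^3+1)(p^2+1). -/

import Mathlib

open Finset Polynomial
open scoped LinearAlgebra.Projectivization
open scoped Classical

noncomputable instance gfFintype (p : ℕ) [Fact p.Prime] : Fintype (GaloisField p 2) :=
  Fintype.ofFinite _

noncomputable instance projFintype (p : ℕ) [Fact p.Prime] :
    Fintype (ℙ (GaloisField p 2) (Fin 4 → GaloisField p 2)) :=
  @Fintype.ofFinite _
    (Quotient.finite (projectivizationSetoid (GaloisField p 2) (Fin 4 → GaloisField p 2)))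

namespace FermatAux

variable (p : ℕ) [Fact p.Prime]

local notation "K" => GaloisField p 2

lemma cardK : Fintype.card (GaloisField p 2) = p ^ 2 := by
  rw [← Nat.card_eq_fintype_card, GaloisField.card p 2 two_ne_zero]

lemma exists_pf (x : K) : ∃ a : ZMod p, algebraMap (ZMod p) K a = x ^ (p + 1) := by
  have hp1 : 1 < p := (Fact.out : p.Prime).one_lt
  have hx : (x ^ (p + 1)) ^ p = x ^ (p + 1) := by
    have hcard : x ^ (p ^ 2) = x := by rw [← cardK p]; exact FiniteField.pow_card x
    calc (x ^ (p + 1)) ^ p = x ^ (p ^ 2) * x ^ p := by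
          rw [← pow_mul, ← pow_add]; ring_nf
      _ = x ^ (p + 1) := by rw [hcard, ← pow_succ']
  set T : Finset K := Finset.univ.image (algebraMap (ZMod p) K) with hT
  have hTcard : T.card = p := by
    rw [hT, Finset.card_image_of_injective _ (algebraMap (ZMod p) K).injective,
      Finset.card_univ, ZMod.card]
  have hsub : T ⊆ Finset.univ.filter (fun z : K => z ^ p = z) := by
    intro z hz
    simp only [hT, Finset.mem_image] at hz
    obtain ⟨a, -, rfl⟩ := hz
    simp only [Finset.mem_filter, Finset.mem_univ, true_and]
    rw [← map_pow, ZMod.pow_card]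
  have hq0 : (X ^ p - X : (GaloisField p 2)[X]) ≠ 0 :=
    FiniteField.X_pow_card_sub_X_ne_zero _ hp1
  have hle : (Finset.univ.filter (fun z : K => z ^ p = z)).card ≤ p := by
    have hss : Finset.univ.filter (fun z : K => z ^ p = z)
        ⊆ (X ^ p - X : (GaloisField p 2)[X]).roots.toFinset := by
      intro z hz
      simp only [Finset.mem_filter, Finset.mem_univ, true_and] at hz
      rw [Multiset.mem_toFinset, mem_roots hq0]
      simp [IsRoot, sub_eq_zero, hz]
    calc (Finset.univ.filter (fun z : K => z ^ p = z)).card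
        ≤ (X ^ p - X : (GaloisField p 2)[X]).roots.toFinset.card := Finset.card_le_card hss
      _ ≤ Multiset.card (X ^ p - X : (GaloisField p 2)[X]).roots := Multiset.toFinset_card_le _
      _ ≤ (X ^ p - X : (GaloisField p 2)[X]).natDegree := Polynomial.card_roots' _
      _ = p := FiniteField.X_pow_card_sub_X_natDegree_eq _ hp1
  have hTeq : T = Finset.univ.filter (fun z : K => z ^ p = z) :=
    Finset.eq_of_subset_of_card_le hsub (by rw [hTcard]; exact hle)
  have hmem : x ^ (p + 1) ∈ T := by rw [hTeq]; simp [hx]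
  simp only [hT, Finset.mem_image] at hmem
  obtain ⟨a, -, ha⟩ := hmem
  exact ⟨a, ha⟩

noncomputable def nrm (x : K) : ZMod p := (exists_pf p x).choose

lemma nrm_spec (x : K) : algebraMap (ZMod p) K (nrm p x) = x ^ (p + 1) :=
  (exists_pf p x).choose_spec

lemma nrm_eq_zero {x : K} : nrm p x = 0 ↔ x = 0 := by
  constructor
  · intro h
    have h2 := nrm_spec p x
    rw [h, map_zero] at h2
    exact pow_eq_zero_iff (Nat.succ_ne_zero p) |>.mp h2.symm
  · rintro rfl
    apply (algebraMap (ZMod p) K).injective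
    rw [nrm_spec, map_zero, zero_pow (Nat.succ_ne_zero p)]

noncomputable def m (a : ZMod p) : ℕ := (univ.filter fun x : K => nrm p x = a).card

lemma m_zero : m p 0 = 1 := by
  have : (univ.filter fun x : K => nrm p x = 0) = {0} := by
    ext x; simp [nrm_eq_zero]
  rw [m, this, Finset.card_singleton]

lemma m_sum : ∑ a, m p a = p ^ 2 := by
  rw [← cardK p, ← Finset.card_univ]
  exact (Finset.card_eq_sum_card_fiberwise fun x _ => Finset.mem_univ (nrm p x)).symm

lemma m_le (a : ZMod p) : m p a ≤ p + 1 := by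
  have hss : (univ.filter fun x : K => nrm p x = a)
      ⊆ (nthRoots (p + 1) (algebraMap (ZMod p) K a)).toFinset := by
    intro x hx
    simp only [Finset.mem_filter, Finset.mem_univ, true_and] at hx
    rw [Multiset.mem_toFinset, mem_nthRoots (Nat.succ_pos p), ← hx, nrm_spec]
  calc m p a ≤ _ := Finset.card_le_card hss
    _ ≤ Multiset.card (nthRoots (p + 1) (algebraMap (ZMod p) K a)) :=
        Multiset.toFinset_card_le _
    _ ≤ p + 1 := Polynomial.card_nthRoots _ _

lemma m_eq {a : ZMod p} (ha : a ≠ 0) : m p a = p + 1 := by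
  haveI : NeZero p := ⟨(Fact.out : p.Prime).pos.ne'⟩
  by_contra h
  have hlt : m p a < p + 1 := lt_of_le_of_ne (m_le p a) h
  have h0 : (0 : ZMod p) ∈ (univ : Finset (ZMod p)) := Finset.mem_univ _
  have hsplit : m p 0 + ∑ b ∈ univ.erase 0, m p b = ∑ b, m p b :=
    Finset.add_sum_erase _ _ h0
  have hcard : (univ.erase (0 : ZMod p)).card = p - 1 := by
    rw [Finset.card_erase_of_mem h0, Finset.card_univ, ZMod.card]
  have hstrict : ∑ b ∈ univ.erase 0, m p b < ∑ b ∈ univ.erase (0 : ZMod p), (p + 1) :=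
    Finset.sum_lt_sum (fun b _ => m_le p b) ⟨a, Finset.mem_erase.mpr ⟨ha, Finset.mem_univ _⟩, hlt⟩
  rw [Finset.sum_const, hcard, smul_eq_mul] at hstrict
  have hm0 := m_zero p
  have hms := m_sum p
  have hp1 : 1 ≤ p := (Fact.out : p.Prime).one_le
  obtain ⟨q, rfl⟩ : ∃ q, p = q + 1 := ⟨p - 1, by omega⟩
  simp only [Nat.add_sub_cancel] at hstrict
  have e1 : (q + 1) ^ 2 = q * (q + 2) + 1 := by ring
  have e2 : q * (q + 1 + 1) = q * (q + 2) := by ring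
  omega

noncomputable def G (k : ℕ) (a : ZMod p) : ℕ :=
  ∑ y ∈ univ.filter (fun y : Fin k → ZMod p => ∑ i, y i = a), ∏ i, m p (y i)

lemma G_eq (k : ℕ) (a : ZMod p) :
    G p k a = ∑ y : Fin k → ZMod p, if ∑ i, y i = a then ∏ i, m p (y i) else 0 :=
  Finset.sum_filter _ _

lemma G_zero (a : ZMod p) : G p 0 a = if a = 0 then 1 else 0 := by
  rw [G_eq]
  simp [eq_comm]

lemma G_succ (k : ℕ) (a : ZMod p) :
    G p (k + 1) a = ∑ b : ZMod p, m p b * G p k (a - b) := by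
  rw [G_eq]
  rw [← Equiv.sum_comp (Fin.consEquiv (fun _ : Fin (k+1) => ZMod p))
    (fun y : Fin (k+1) → ZMod p => if ∑ i, y i = a then ∏ i, m p (y i) else 0)]
  rw [Fintype.sum_prod_type]
  refine Finset.sum_congr rfl fun b _ => ?_
  rw [G_eq, Finset.mul_sum]
  refine Finset.sum_congr rfl fun z _ => ?_
  simp only [Fin.consEquiv_apply, Fin.sum_univ_succ, Fin.prod_univ_succ, Fin.cons_zero,
    Fin.cons_succ, mul_ite, mul_zero]
  exact if_congr (by rw [eq_sub_iff_add_eq, add_comm]) rfl rfl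

lemma G_total (k : ℕ) : ∑ a, G p k a = p ^ (2 * k) := by
  have h1 : ∑ a, G p k a = ∑ y : Fin k → ZMod p, ∏ i, m p (y i) :=
    Finset.sum_fiberwise_of_maps_to (fun y _ => Finset.mem_univ _) _
  rw [h1, ← Fintype.piFinset_univ, ← Finset.prod_univ_sum]
  simp [m_sum, pow_mul]

lemma G_key (k : ℕ) :
    G p (k + 1) 0 + (p + 1) * G p k 0 = G p k 0 + (p + 1) * p ^ (2 * k) := by
  have h0 : (0 : ZMod p) ∈ (univ : Finset (ZMod p)) := Finset.mem_univ _
  have hsplit : m p 0 * G p k (0 - 0) + ∑ b ∈ univ.erase 0, m p b * G p k (0 - b)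
      = ∑ b, m p b * G p k (0 - b) :=
    Finset.add_sum_erase univ (fun b => m p b * G p k (0 - b)) h0
  have hre : ∑ b ∈ univ.erase 0, m p b * G p k (0 - b)
      = (p + 1) * ∑ a ∈ univ.erase 0, G p k a := by
    rw [Finset.mul_sum]
    refine Finset.sum_equiv (Equiv.neg (ZMod p)) ?_ ?_
    · intro b; simp
    · intro b hb
      rw [m_eq p (Finset.mem_erase.mp hb).1, zero_sub]
      rfl
  have htot : G p k 0 + ∑ a ∈ univ.erase 0, G p k a = p ^ (2 * k) := by
    rw [← G_total p k, ← Finset.add_sum_erase _ _ h0]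
  rw [G_succ, ← hsplit, hre, m_zero, sub_zero, one_mul, ← htot]
  ring

lemma G4_val : ((G p 4 0 : ℤ)) = (p : ℤ) ^ 7 + (p : ℤ) ^ 4 - (p : ℤ) ^ 3 := by
  have h0 : ((G p 0 0 : ℤ)) = 1 := by rw [G_zero]; norm_num
  have c : ∀ k : ℕ, ((G p (k + 1) 0 : ℤ)) + ((p : ℤ) + 1) * (G p k 0 : ℤ)
      = (G p k 0 : ℤ) + ((p : ℤ) + 1) * (p : ℤ) ^ (2 * k) := by
    intro k; exact_mod_cast G_key p k
  have h1 : ((G p 1 0 : ℤ)) = 1 := by linear_combination c 0 - (p : ℤ) * h0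
  have h2 : ((G p 2 0 : ℤ)) = (p:ℤ)^3 + (p:ℤ)^2 - (p:ℤ) := by
    linear_combination c 1 - (p : ℤ) * h1
  have h3 : ((G p 3 0 : ℤ)) = (p:ℤ)^5 - (p:ℤ)^3 + (p:ℤ)^2 := by
    linear_combination c 2 - (p : ℤ) * h2
  linear_combination c 3 - (p : ℤ) * h3

lemma affine_card :
    (univ.filter fun v : Fin 4 → K => ∑ i, (v i) ^ (p + 1) = 0).card = G p 4 0 := by
  have hcond : ∀ v : Fin 4 → K,
      (∑ i, (v i) ^ (p + 1) = 0) ↔ (∑ i, nrm p (v i) = 0) := by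
    intro v
    rw [← (algebraMap (ZMod p) K).injective.eq_iff, map_sum, map_zero]
    simp only [nrm_spec]
  rw [Finset.card_eq_sum_card_fiberwise
    (f := fun v : Fin 4 → K => fun i => nrm p (v i))
    (t := univ.filter fun y : Fin 4 → ZMod p => ∑ i, y i = 0)
    (fun v hv => by
      simp only [Finset.mem_coe, Finset.mem_filter, Finset.mem_univ, true_and] at hv ⊢
      exact (hcond v).mp hv)]
  refine Finset.sum_congr rfl fun y hy => ?_
  have hfib : ((univ.filter fun v : Fin 4 → K => ∑ i, (v i) ^ (p + 1) = 0).filter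
      fun v => (fun i => nrm p (v i)) = y)
      = Fintype.piFinset (fun i => univ.filter fun x : K => nrm p x = y i) := by
    ext v
    simp only [Finset.mem_filter, Fintype.mem_piFinset, Finset.mem_univ, true_and,
      funext_iff]
    constructor
    · rintro ⟨-, h⟩ i; exact h i
    · intro h
      refine ⟨(hcond v).mpr ?_, fun i => h i⟩
      have : ∀ i, nrm p (v i) = y i := h
      simp only [this]
      exact (Finset.mem_filter.mp hy).2
  rw [hfib, Fintype.card_piFinset]
  rfl

lemma Qsmul (c : K) (v : Fin 4 → K) :
    ∑ i, ((c • v) i) ^ (p + 1) = c ^ (p + 1) * ∑ i, (v i) ^ (p + 1) := by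
  rw [Finset.mul_sum]
  exact Finset.sum_congr rfl fun i _ => by simp [mul_pow]

lemma mem_S_iff (v : Fin 4 → K) (hv : v ≠ 0) :
    (∑ i, ((Projectivization.mk K v hv).rep i) ^ (p + 1) = 0)
      ↔ ∑ i, (v i) ^ (p + 1) = 0 := by
  obtain ⟨a, ha⟩ := Projectivization.exists_smul_eq_mk_rep K v hv
  rw [← ha, Units.smul_def, Qsmul, mul_eq_zero]
  simp [pow_eq_zero_iff (Nat.succ_ne_zero p), a.ne_zero]

private lemma one_ne : (fun _ : Fin 4 => (1 : K)) ≠ 0 := by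
  intro h; exact one_ne_zero (congrFun h 0)

noncomputable def pmap (v : Fin 4 → K) : ℙ K (Fin 4 → K) :=
  if h : v = 0 then Projectivization.mk K (fun _ => 1) (one_ne p)
  else Projectivization.mk K v h

lemma pmap_ne {v : Fin 4 → K} (hv : v ≠ 0) :
    pmap p v = Projectivization.mk K v hv := dif_neg hv

lemma proj_card :
    ({x : ℙ K (Fin 4 → K) | ∑ i, (x.rep i) ^ (p + 1) = 0}.toFinset.card) * (p ^ 2 - 1)
      = (univ.filter fun v : Fin 4 → K => v ≠ 0 ∧ ∑ i, (v i) ^ (p + 1) = 0).card := by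
  set S := {x : ℙ K (Fin 4 → K) | ∑ i, (x.rep i) ^ (p + 1) = 0} with hS
  have hmaps : ∀ v ∈ univ.filter fun v : Fin 4 → K => v ≠ 0 ∧ ∑ i, (v i) ^ (p + 1) = 0,
      pmap p v ∈ S.toFinset := by
    intro v hv
    simp only [Finset.mem_filter, Finset.mem_univ, true_and] at hv
    rw [pmap_ne p hv.1, Set.mem_toFinset]
    exact (mem_S_iff p v hv.1).mpr hv.2
  have hfibcard : ∀ x ∈ S.toFinset,
      ((univ.filter fun v : Fin 4 → K => v ≠ 0 ∧ ∑ i, (v i) ^ (p + 1) = 0).filter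
        fun v => pmap p v = x).card = p ^ 2 - 1 := by
    intro x hx
    rw [Set.mem_toFinset] at hx
    have hfib : ((univ.filter fun v : Fin 4 → K => v ≠ 0 ∧ ∑ i, (v i) ^ (p + 1) = 0).filter
        fun v => pmap p v = x) = univ.image fun c : Kˣ => (c : K) • x.rep := by
      ext v
      simp only [Finset.mem_filter, Finset.mem_univ, true_and, Finset.mem_image]
      constructor
      · rintro ⟨⟨hv0, -⟩, hfv⟩
        rw [pmap_ne p hv0] at hfv
        have hmk : Projectivization.mk K v hv0
            = Projectivization.mk K x.rep x.rep_nonzero := by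
          rw [hfv, Projectivization.mk_rep]
        obtain ⟨a, ha⟩ := (Projectivization.mk_eq_mk_iff K _ _ _ _).mp hmk
        exact ⟨a, ha⟩
      · rintro ⟨c, rfl⟩
        have hv0 : (c : K) • x.rep ≠ 0 := smul_ne_zero c.ne_zero x.rep_nonzero
        refine ⟨⟨hv0, ?_⟩, ?_⟩
        · rw [Qsmul, hx, mul_zero]
        · rw [pmap_ne p hv0]
          have hmk : Projectivization.mk K ((c : K) • x.rep) hv0
              = Projectivization.mk K x.rep x.rep_nonzero :=
            (Projectivization.mk_eq_mk_iff K _ _ _ _).mpr ⟨c, rfl⟩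
          rw [hmk, Projectivization.mk_rep]
    have hinj : Function.Injective fun c : Kˣ => (c : K) • x.rep := by
      intro c c' hcc
      have h := sub_eq_zero.mpr hcc
      rw [← sub_smul] at h
      rcases smul_eq_zero.mp h with h' | h'
      · exact Units.ext (sub_eq_zero.mp h')
      · exact absurd h' x.rep_nonzero
    rw [hfib, Finset.card_image_of_injective _ hinj, Finset.card_univ,
      Fintype.card_units, cardK]
  rw [Finset.card_eq_sum_card_fiberwise hmaps, Finset.sum_congr rfl hfibcard,
    Finset.sum_const, smul_eq_mul, mul_comm]

lemma erase_card :
    (univ.filter fun v : Fin 4 → K => v ≠ 0 ∧ ∑ i, (v i) ^ (p + 1) = 0).card + 1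
      = G p 4 0 := by
  have hzero : (0 : Fin 4 → K) ∈ univ.filter fun v : Fin 4 → K =>
      ∑ i, (v i) ^ (p + 1) = 0 := by
    simp [zero_pow (Nat.succ_ne_zero p)]
  have hAF : (univ.filter fun v : Fin 4 → K => v ≠ 0 ∧ ∑ i, (v i) ^ (p + 1) = 0)
      = (univ.filter fun v : Fin 4 → K => ∑ i, (v i) ^ (p + 1) = 0).erase 0 := by
    ext v
    simp only [Finset.mem_filter, Finset.mem_erase, Finset.mem_univ, true_and]
  have hpos : 1 ≤ (univ.filter fun v : Fin 4 → K => ∑ i, (v i) ^ (p + 1) = 0).card :=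
    Finset.card_pos.mpr ⟨0, hzero⟩
  rw [hAF, Finset.card_erase_of_mem hzero, ← affine_card p]
  exact Nat.succ_pred_eq_of_pos hpos

end FermatAux

/-- The Fermat hypersurface `x₀^(p+1) + x₁^(p+1) + x₂^(p+1) + x₃^(p+1) = 0` in `ℙ³`
over `𝔽_{p²}` has exactly `(p³+1)(p²+1)` points. -/
theorem stmt2 (p : ℕ) [Fact p.Prime] :
    {x : ℙ (GaloisField p 2) (Fin 4 → GaloisField p 2) |
        ∑ i, (x.rep i) ^ (p + 1) = 0}.ncard = (p ^ 3 + 1) * (p ^ 2 + 1) := by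
  have hp2 : 2 ≤ p := (Fact.out : p.Prime).two_le
  rw [Set.ncard_eq_toFinset_card']
  have hmul := FermatAux.proj_card p
  have herase := FermatAux.erase_card p
  have g4 := FermatAux.G4_val p
  have hcomb : ({x : ℙ (GaloisField p 2) (Fin 4 → GaloisField p 2) |
      ∑ i, (x.rep i) ^ (p + 1) = 0}.toFinset.card) * (p ^ 2 - 1) + 1
      = FermatAux.G p 4 0 := by
    rw [hmul]; exact herase
  have hsq : 4 ≤ p ^ 2 := by nlinarith
  have hpos : 0 < p ^ 2 - 1 := by clear hcomb hmul herase g4; omega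
  apply Nat.eq_of_mul_eq_mul_right hpos
  have hle : 1 ≤ p ^ 2 := by clear hcomb hmul herase g4; omega
  zify [hle] at hcomb ⊢
  linear_combination hcomb + g4
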